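/- Let G be a graph with h(G) = bw(G) and let y be an optimum bisection vector (cw(y) = bw(G)). Then for every d^opt ∈ ℝ^n with g(G,d^opt) = bw(G) and ∑_i d^opt_i = 4·bw(G) − 2|E|, there exists α ∈ ℝ such that d^opt = d^{(y)} + α·y. -/

import Mathlib

open Matrix BigOperators Finset

noncomputable section

/-- Adjacency matrix of a graph on `Fin n`, with real entries. -/
def adjA {n : ℕ} (G : SimpleGraph (Fin n)) [DecidableRel G.Adj] :
    Matrix (Fin n) (Fin n) ℝ :=
  Matrix.of fun i j => if G.Adj i j then (1 : ℝ) else 0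

/-- A bisection vector: entries in `{+1, -1}` summing to zero. -/
def IsBisection {n : ℕ} (x : Fin n → ℝ) : Prop :=
  (∀ i, x i = 1 ∨ x i = -1) ∧ ∑ i, x i = 0

/-- Cut width of a `±1` vector: `∑_{{i,j}∈E} (1 - x_i x_j)/2`, written as a sum
over ordered pairs (each edge counted twice, hence the `/4`). -/
def cw {n : ℕ} (G : SimpleGraph (Fin n)) [DecidableRel G.Adj] (x : Fin n → ℝ) : ℝ :=
  (∑ i, ∑ j, adjA G i j * (1 - x i * x j)) / 4

/-- Bisection width: minimum cut width over all bisection vectors. -/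
def bw {n : ℕ} (G : SimpleGraph (Fin n)) [DecidableRel G.Adj] : ℝ :=
  sInf {c | ∃ x : Fin n → ℝ, IsBisection x ∧ cw G x = c}

/-- `λ_S(B)`: supremum of the Rayleigh quotient of `B` over nonzero vectors of
coordinate sum zero. -/
def lamS {n : ℕ} (B : Matrix (Fin n) (Fin n) ℝ) : ℝ :=
  sSup {r | ∃ x : Fin n → ℝ, x ≠ 0 ∧ ∑ i, x i = 0 ∧
    r = (x ⬝ᵥ B.mulVec x) / (∑ i, (x i) ^ 2)}

/-- Sum of all entries of a matrix. -/
def msum {n : ℕ} (M : Matrix (Fin n) (Fin n) ℝ) : ℝ := ∑ i, ∑ j, M i j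

/-- Boppana's function `g(G,d)`. -/
def gB {n : ℕ} (G : SimpleGraph (Fin n)) [DecidableRel G.Adj] (d : Fin n → ℝ) : ℝ :=
  (msum (adjA G + Matrix.diagonal d) - n * lamS (adjA G + Matrix.diagonal d)) / 4

/-- Boppana's lower bound `h(G) = sup_d g(G,d)`. -/
def hB {n : ℕ} (G : SimpleGraph (Fin n)) [DecidableRel G.Adj] : ℝ :=
  sSup {r | ∃ d : Fin n → ℝ, r = gB G d}

/-- Number of edges of `G`. -/
def edgeCount {n : ℕ} (G : SimpleGraph (Fin n)) [DecidableRel G.Adj] : ℕ :=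
  G.edgeFinset.card

/-- The vector `d^{(y)} = -diag(y)·A·y`, i.e. `d^{(y)}_i = -y_i ∑_j A_{ij} y_j`. -/
def dVec {n : ℕ} (G : SimpleGraph (Fin n)) [DecidableRel G.Adj]
    (y : Fin n → ℝ) : Fin n → ℝ :=
  fun i => -(y i) * ∑ j, adjA G i j * y j

private lemma quad_aux (L c : ℝ) (hcle : c ≤ 0)
    (hf : ∀ t : ℝ, 2*t*L + t^2*c ≤ 0) : L = 0 := by
  by_contra hL0
  have hL2 : 0 < L^2 := by
    rcases lt_or_gt_of_ne hL0 with h | h <;> nlinarith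
  set m : ℝ := -c with hm'
  have hm : 0 ≤ m := by simp [hm']; linarith
  have hmpos : (0:ℝ) < 2*(m+1) := by linarith
  set t : ℝ := L / (2*(m+1)) with ht'
  have ht : t * (2*(m+1)) = L := div_mul_cancel₀ _ (by linarith)
  have h := hf t
  have hcm : c = -m := by simp [hm']
  rw [hcm] at h
  have h2 : 2*t*L = t*t*(4*(m+1)) := by rw [← ht]; ring
  have h3 : t^2*(3*m+4) ≤ 0 := by nlinarith [h, h2]
  have h4 : t^2 ≤ 0 := by nlinarith [h3, hm]
  have h5 : L^2 = t^2 * (4*(m+1)^2) := by rw [← ht]; ring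
  nlinarith [h4, h5, hL2, hm]

/-- every optimal `d^opt` (with normalized sum) is of the form
`d^{(y)} + α·y` for an optimum bisection vector `y`. -/
theorem dopt_eq_dVec_add_smul {n : ℕ} (hn2 : 2 ≤ n) (hne : Even n)
    (G : SimpleGraph (Fin n)) [DecidableRel G.Adj]
    (hh : hB G = bw G)
    (y : Fin n → ℝ) (hy : IsBisection y) (hopt : cw G y = bw G)
    (dopt : Fin n → ℝ) (hg : gB G dopt = bw G)
    (hsum : ∑ i, dopt i = 4 * bw G - 2 * (edgeCount G : ℝ)) :
    ∃ α : ℝ, dopt = fun i => dVec G y i + α * y i := by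
  classical
  have hn0 : 0 < n := by omega
  let k0 : Fin n := ⟨0, hn0⟩
  obtain ⟨hy1, hy0⟩ := hy
  have hsq : ∀ i, y i * y i = 1 := fun i => by rcases hy1 i with h | h <;> rw [h] <;> ring
  simp only [gB] at hg
  simp only [cw] at hopt
  set Bm : Matrix (Fin n) (Fin n) ℝ := adjA G + Matrix.diagonal dopt with hBm
  have hAsym : ∀ i j, adjA G i j = adjA G j i := by
    intro i j; simp [adjA, G.adj_comm]
  have hBsymm : ∀ i j, Bm i j = Bm j i := by
    intro i j
    simp only [hBm, Matrix.add_apply, Matrix.diagonal_apply]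
    rw [hAsym i j]
    by_cases h : i = j
    · subst h; rfl
    · simp [h, Ne.symm h]
  -- sum of adjacency entries
  have hdeg : ∀ i, ∑ j, adjA G i j = (G.degree i : ℝ) := by
    intro i
    simp only [adjA, Matrix.of_apply]
    rw [Finset.sum_boole]
    congr 1
    rw [SimpleGraph.degree, SimpleGraph.neighborFinset_eq_filter]
  have hmsumA : msum (adjA G) = 2 * (edgeCount G : ℝ) := by
    simp only [msum]
    rw [Finset.sum_congr rfl fun i _ => hdeg i, ← Nat.cast_sum,
      SimpleGraph.sum_degrees_eq_twice_card_edges]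
    push_cast [edgeCount]; ring
  have hmsumB : msum Bm = 4 * bw G := by
    simp only [hBm, msum, Matrix.add_apply, Finset.sum_add_distrib]
    have h1 : ∀ i : Fin n, ∑ j, (Matrix.diagonal dopt) i j = dopt i := by
      intro i
      simp [Matrix.diagonal_apply, Finset.sum_ite_eq]
    rw [show (∑ i, ∑ j, (Matrix.diagonal dopt) i j) = ∑ i, dopt i from
      Finset.sum_congr rfl fun i _ => h1 i]
    have := hmsumA
    simp only [msum] at this
    rw [this, hsum]; ring
  -- lamS Bm = 0
  have hlam : lamS Bm = 0 := by
    have hn' : (n : ℝ) ≠ 0 := by positivity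
    have h0 : (msum Bm - n * lamS Bm) / 4 = bw G := hg
    have hX : msum Bm - n * lamS Bm = bw G * 4 := (div_eq_iff (by norm_num)).mp h0
    have hnl : (n:ℝ) * lamS Bm = 0 := by rw [hmsumB] at hX; linarith
    exact (mul_eq_zero.mp hnl).resolve_left hn'
  -- quadratic form is nonpositive on sum-zero vectors
  have qd : ∀ x : Fin n → ℝ, x ⬝ᵥ Bm.mulVec x = ∑ i, ∑ j, x i * Bm i j * x j := by
    intro x; simp [dotProduct, Matrix.mulVec, Finset.mul_sum, mul_assoc]
  have hbdd : BddAbove {r | ∃ x : Fin n → ℝ, x ≠ 0 ∧ ∑ i, x i = 0 ∧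
      r = (x ⬝ᵥ Bm.mulVec x) / (∑ i, (x i) ^ 2)} := by
    refine ⟨∑ i, ∑ j, |Bm i j|, ?_⟩
    rintro r ⟨x, hx0, -, rfl⟩
    obtain ⟨i0, hi0⟩ := Function.ne_iff.mp hx0
    have hi0' : x i0 ≠ 0 := by simpa using hi0
    have hSpos : (0:ℝ) < ∑ i, (x i)^2 := by
      have h1 : (0:ℝ) < (x i0)^2 := by positivity
      have h2 : (x i0)^2 ≤ ∑ i, (x i)^2 :=
        Finset.single_le_sum (fun k _ => sq_nonneg (x k)) (Finset.mem_univ i0)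
      linarith
    rw [div_le_iff₀ hSpos, qd]
    calc ∑ i, ∑ j, x i * Bm i j * x j
        ≤ ∑ i, ∑ j, |Bm i j| * (∑ k, (x k)^2) := by
          apply Finset.sum_le_sum; intro i _
          apply Finset.sum_le_sum; intro j _
          have h1 : x i * Bm i j * x j ≤ |Bm i j| * (|x i| * |x j|) := by
            calc x i * Bm i j * x j ≤ |x i * Bm i j * x j| := le_abs_self _
              _ = |Bm i j| * (|x i| * |x j|) := by rw [abs_mul, abs_mul]; ring
          have h3 : |x i| * |x j| ≤ ∑ k, (x k)^2 := by
            have hij : |x i| * |x j| ≤ ((x i)^2 + (x j)^2)/2 := by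
              nlinarith [sq_nonneg (|x i| - |x j|), sq_abs (x i), sq_abs (x j),
                abs_nonneg (x i), abs_nonneg (x j)]
            have hi : (x i)^2 ≤ ∑ k, (x k)^2 :=
              Finset.single_le_sum (fun k _ => sq_nonneg (x k)) (Finset.mem_univ i)
            have hj : (x j)^2 ≤ ∑ k, (x k)^2 :=
              Finset.single_le_sum (fun k _ => sq_nonneg (x k)) (Finset.mem_univ j)
            linarith
          calc x i * Bm i j * x j ≤ |Bm i j| * (|x i| * |x j|) := h1
            _ ≤ |Bm i j| * (∑ k, (x k)^2) :=
              mul_le_mul_of_nonneg_left h3 (abs_nonneg _)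
      _ = (∑ i, ∑ j, |Bm i j|) * (∑ k, (x k)^2) := by
          simp [Finset.sum_mul]
  have hqnonpos : ∀ x : Fin n → ℝ, (∑ i, x i = 0) →
      ∑ i, ∑ j, x i * Bm i j * x j ≤ 0 := by
    intro x hx
    by_cases hx0 : x = 0
    · subst hx0; simp
    · have hmem : (x ⬝ᵥ Bm.mulVec x) / (∑ i, (x i)^2) ∈
          {r | ∃ x : Fin n → ℝ, x ≠ 0 ∧ ∑ i, x i = 0 ∧
            r = (x ⬝ᵥ Bm.mulVec x) / (∑ i, (x i) ^ 2)} := ⟨x, hx0, hx, rfl⟩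
      have hle := le_csSup hbdd hmem
      have hlam' : sSup {r | ∃ x : Fin n → ℝ, x ≠ 0 ∧ ∑ i, x i = 0 ∧
          r = (x ⬝ᵥ Bm.mulVec x) / (∑ i, (x i) ^ 2)} = 0 := hlam
      rw [hlam'] at hle
      obtain ⟨i0, hi0⟩ := Function.ne_iff.mp hx0
      have hi0' : x i0 ≠ 0 := by simpa using hi0
      have hSpos : (0:ℝ) < ∑ i, (x i)^2 := by
        have h1 : (0:ℝ) < (x i0)^2 := by positivity
        have h2 : (x i0)^2 ≤ ∑ i, (x i)^2 :=
          Finset.single_le_sum (fun k _ => sq_nonneg (x k)) (Finset.mem_univ i0)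
        linarith
      have h3 : x ⬝ᵥ Bm.mulVec x ≤ 0 * (∑ i, (x i)^2) := (div_le_iff₀ hSpos).mp hle
      rw [zero_mul, qd] at h3
      exact h3
  -- q y = 0
  have hyq : ∑ i, ∑ j, y i * Bm i j * y j = 0 := by
    have h1 : ∀ i, ∑ j, y i * Bm i j * y j = (∑ j, adjA G i j * (y i * y j)) + dopt i := by
      intro i
      have hterm : ∀ j, y i * Bm i j * y j
          = adjA G i j * (y i * y j) + (if i = j then dopt i * (y i * y j) else 0) := by
        intro j
        simp only [hBm, Matrix.add_apply, Matrix.diagonal_apply]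
        by_cases h : i = j
        · subst h; simp; ring
        · simp [h]; ring
      rw [Finset.sum_congr rfl fun j _ => hterm j, Finset.sum_add_distrib]
      congr 1
      rw [Finset.sum_ite_eq]
      simp [hsq i]
    rw [Finset.sum_congr rfl fun i _ => h1 i, Finset.sum_add_distrib]
    have hT : ∑ i, ∑ j, adjA G i j * (y i * y j) = 2 * (edgeCount G : ℝ) - 4 * bw G := by
      have hexp : (∑ i, ∑ j, adjA G i j * (1 - y i * y j))
          = msum (adjA G) - ∑ i, ∑ j, adjA G i j * (y i * y j) := by
        simp only [msum, mul_sub, mul_one, Finset.sum_sub_distrib]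
      rw [hexp] at hopt
      rw [hmsumA] at hopt
      have h4 : 2 * (edgeCount G : ℝ) - (∑ i, ∑ j, adjA G i j * (y i * y j)) = 4 * bw G := by
        field_simp at hopt; simp only [mul_assoc] at hopt; linarith
      linarith
    rw [hT, hsum]; ring
  -- bilinear symmetry
  have bilin_symm : ∀ u v : Fin n → ℝ,
      ∑ i, ∑ j, u i * Bm i j * v j = ∑ i, ∑ j, v i * Bm i j * u j := by
    intro u v
    rw [Finset.sum_comm]
    apply Finset.sum_congr rfl; intro i _
    apply Finset.sum_congr rfl; intro j _
    rw [hBsymm j i]; ring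
  -- key: y ⬝ Bm z = 0 for all sum-zero z
  have key : ∀ z : Fin n → ℝ, (∑ i, z i = 0) →
      ∑ i, ∑ j, y i * Bm i j * z j = 0 := by
    intro z hz
    set L : ℝ := ∑ i, ∑ j, y i * Bm i j * z j with hL
    set c : ℝ := ∑ i, ∑ j, z i * Bm i j * z j with hc
    have hcle : c ≤ 0 := hqnonpos z hz
    have hf : ∀ t : ℝ, 2*t*L + t^2*c ≤ 0 := by
      intro t
      have hsum0 : ∑ i, (y i + t * z i) = 0 := by
        rw [Finset.sum_add_distrib, ← Finset.mul_sum, hy0, hz]; ring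
      have h := hqnonpos (fun i => y i + t * z i) hsum0
      have hexp : ∑ i, ∑ j, (y i + t * z i) * Bm i j * (y j + t * z j)
          = (∑ i, ∑ j, y i * Bm i j * y j) + 2*t*L + t^2*c := by
        have hzy : ∑ i, ∑ j, z i * Bm i j * y j = L := by
          rw [bilin_symm z y]
        calc ∑ i, ∑ j, (y i + t * z i) * Bm i j * (y j + t * z j)
            = ∑ i, ∑ j, (y i * Bm i j * y j + t * (y i * Bm i j * z j)
                + t * (z i * Bm i j * y j) + t^2 * (z i * Bm i j * z j)) := by
              apply Finset.sum_congr rfl; intro i _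
              apply Finset.sum_congr rfl; intro j _
              ring
          _ = (∑ i, ∑ j, y i * Bm i j * y j) + t * (∑ i, ∑ j, y i * Bm i j * z j)
              + t * (∑ i, ∑ j, z i * Bm i j * y j)
              + t^2 * (∑ i, ∑ j, z i * Bm i j * z j) := by
              simp [Finset.sum_add_distrib, Finset.mul_sum]
          _ = (∑ i, ∑ j, y i * Bm i j * y j) + 2*t*L + t^2*c := by
              rw [hzy, ← hL, ← hc]; ring
      rw [hexp, hyq] at h
      linarith
    exact quad_aux L c hcle hf
  -- (Bᵀ y) is constant
  set w : Fin n → ℝ := fun j => ∑ i, y i * Bm i j with hw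
  have hwc : ∀ i, w i = w k0 := by
    intro i
    by_cases hik : i = k0
    · rw [hik]
    · set z : Fin n → ℝ := fun k => (if k = i then (1:ℝ) else 0) - (if k = k0 then 1 else 0)
        with hzdef
      have hz : ∑ k, z k = 0 := by
        simp [hzdef, Finset.sum_sub_distrib, Finset.sum_ite_eq']
      have hkey := key z hz
      have hx : ∑ a, ∑ j, y a * Bm a j * z j = w i - w k0 := by
        rw [Finset.sum_comm]
        have hcol : ∀ j, ∑ a, y a * Bm a j * z j = w j * z j := by
          intro j
          rw [hw]
          simp only
          rw [Finset.sum_mul]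
        rw [Finset.sum_congr rfl fun j _ => hcol j]
        simp only [hzdef, mul_sub, mul_ite, mul_one, mul_zero]
        rw [Finset.sum_sub_distrib, Finset.sum_ite_eq', Finset.sum_ite_eq']
        simp
      rw [hx] at hkey
      linarith
  -- conclude
  refine ⟨w k0, funext fun i => ?_⟩
  have hwi : w i = (∑ j, adjA G i j * y j) + y i * dopt i := by
    rw [hw]
    simp only
    have hterm : ∀ a, y a * Bm a i = adjA G i a * y a + (if a = i then y i * dopt i else 0) := by
      intro a
      simp only [hBm, Matrix.add_apply, Matrix.diagonal_apply]
      rw [hAsym a i]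
      by_cases h : a = i
      · subst h; simp; ring
      · simp [h]; ring
    rw [Finset.sum_congr rfl fun a _ => hterm a, Finset.sum_add_distrib, Finset.sum_ite_eq']
    simp only [Finset.mem_univ, if_true]
  have h1 : (∑ j, adjA G i j * y j) + y i * dopt i = w k0 := by
    rw [← hwi]; exact hwc i
  have hyi2 : y i * y i = 1 := hsq i
  simp only [dVec]
  linear_combination y i * h1 - dopt i * hyi2
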